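/- Let p be a prime, let K be a finite extension of ℚ_p with ring of integers 𝒪_K (the integral closure of ℤ_p in K), and let I ⊆ 𝒪_K be a nonzero ideal. Let a ≥ 0 be the integer such that I ∩ ℤ_p = p^a ℤ_p. Then 𝒪_K/I is a finite symmetric ℤ/p^a-algebra. -/

import Mathlib

open DirectSum

/-- duality-type lemma: in a finite abelian group killed by `n`, any nonzero element
is detected by some additive character with values in `ZMod n`. -/
lemma exists_addChar_ne_zero (n : ℕ) [NeZero n] (M : Type*) [AddCommGroup M] [Finite M]
    (hM : ∀ x : M, n • x = 0) {s : M} (hs : s ≠ 0) :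
    ∃ ψ : M →+ ZMod n, ψ s ≠ 0 := by
  classical
  obtain ⟨ι, hι, m, hm, ⟨e⟩⟩ := AddCommGroup.equiv_directSum_zmod_of_finite' M
  have hes : e s ≠ 0 := by
    simpa using (AddEquiv.map_ne_zero_iff e).mpr hs
  obtain ⟨i, hi⟩ : ∃ i, (e s) i ≠ 0 := by
    by_contra h
    push_neg at h
    exact hes (DFinsupp.ext fun i => by simpa using h i)
  have hmi := hm i
  haveI : NeZero (m i) := ⟨by omega⟩
  -- m i divides n
  have hdvd : m i ∣ n := by
    have h1 : n • (e.symm (DirectSum.of (fun j => ZMod (m j)) i 1)) = 0 := hM _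
    have h2 : DirectSum.of (fun j => ZMod (m j)) i (n • (1 : ZMod (m i))) = 0 := by
      have h2' := congrArg e h1
      rw [map_nsmul, AddEquiv.apply_symm_apply, map_zero] at h2'
      rw [map_nsmul]
      exact h2'
    have h3 : n • (1 : ZMod (m i)) = 0 := by
      have := congrArg (fun v => v i) h2
      simpa [DirectSum.of_eq_same] using this
    have : ((n : ℕ) : ZMod (m i)) = 0 := by simpa [nsmul_eq_mul] using h3
    exact (ZMod.natCast_eq_zero_iff n (m i)).mp this
  set d := n / m i with hd_def
  have hd : m i * d = n := Nat.mul_div_cancel' hdvd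
  have hdpos : 0 < d :=
    Nat.pos_of_ne_zero (fun h0 => NeZero.ne n (by rw [← hd, h0, Nat.mul_zero]))
  -- the character on ZMod (m i)
  have hcond : (zmultiplesHom (ZMod n) ((d : ℕ) : ZMod n)) ((m i : ℕ) : ℤ) = 0 := by
    simp only [zmultiplesHom_apply]
    rw [zsmul_eq_mul]
    push_cast
    rw [← Nat.cast_mul, hd, ZMod.natCast_self]
  let f : ZMod (m i) →+ ZMod n := ZMod.lift (m i) ⟨zmultiplesHom (ZMod n) ((d : ℕ) : ZMod n), hcond⟩
  have hf : ∀ x : ZMod (m i), x ≠ 0 → f x ≠ 0 := by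
    intro x hx
    have hxv : ((x.val : ℤ) : ZMod (m i)) = x := by
      push_cast
      exact ZMod.natCast_rightInverse x
    have h4 : f (((x.val : ℤ) : ZMod (m i))) = (x.val : ℤ) • ((d : ℕ) : ZMod n) :=
      ZMod.lift_coe _ _ _
    rw [hxv] at h4
    have : f x = ((x.val * d : ℕ) : ZMod n) := by
      rw [h4, zsmul_eq_mul]
      push_cast
      ring
    intro h0
    rw [this] at h0
    have := (ZMod.natCast_eq_zero_iff _ n).mp h0
    rw [← hd] at this
    have hmx : m i ∣ x.val := (Nat.mul_dvd_mul_iff_right hdpos).mp this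
    have : (x.val : ZMod (m i)) = 0 := (ZMod.natCast_eq_zero_iff _ _).mpr hmx
    rw [ZMod.natCast_rightInverse x] at this
    exact hx this
  refine ⟨{ toFun := fun x => f ((e x) i),
            map_zero' := by simp,
            map_add' := ?_ }, ?_⟩
  · intro x y
    simp [map_add, DirectSum.add_apply]
  · exact hf _ hi


lemma exists_min_elt {R : Type*} [CommRing R] [IsDomain R] [IsDedekindDomain R]
    (P : Ideal R) (hP : Prime P) {e : ℕ} (he : 0 < e) :
    ∃ s : R ⧸ P ^ e, s ≠ 0 ∧ ∀ J : Ideal (R ⧸ P ^ e), J ≠ ⊥ → s ∈ J := by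
  haveI hPp : P.IsPrime := Ideal.isPrime_of_prime hP
  have hlt : P ^ e < P ^ (e - 1) :=
    Ideal.pow_right_strictAnti P hP.ne_zero hPp.ne_top (by omega)
  obtain ⟨t, ht1, ht2⟩ := SetLike.exists_of_lt hlt
  refine ⟨Ideal.Quotient.mk _ t, ?_, ?_⟩
  · simpa [Ideal.Quotient.eq_zero_iff_mem] using ht2
  · intro J hJ
    set J' := Ideal.comap (Ideal.Quotient.mk (P ^ e)) J with hJ'def
    have hle : P ^ e ≤ J' := by
      intro x hx
      simp only [hJ'def, Ideal.mem_comap, Ideal.Quotient.eq_zero_iff_mem.mpr hx]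
      exact J.zero_mem
    have hne : J' ≠ P ^ e := by
      intro hEq
      apply hJ
      have : J = Ideal.map (Ideal.Quotient.mk (P ^ e)) J' :=
        (Ideal.map_comap_of_surjective _ Ideal.Quotient.mk_surjective J).symm
      rw [this, hEq, Ideal.map_quotient_self]
    have hdvd : J' ∣ P ^ e := Ideal.dvd_iff_le.mpr hle
    obtain ⟨j, hje, hassoc⟩ := (dvd_prime_pow hP e).mp hdvd
    have hJ'eq : J' = P ^ j := associated_iff_eq.mp hassoc
    have hjne : j ≠ e := fun h => hne (by rw [hJ'eq, h])
    have : P ^ (e - 1) ≤ P ^ j := Ideal.pow_le_pow_right (by omega)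
    have : t ∈ J' := hJ'eq ▸ this ht1
    exact this


set_option maxHeartbeats 1000000 in
theorem main_aux (p : ℕ) [Fact p.Prime] (R : Type*) [CommRing R] [IsDomain R]
    [IsDedekindDomain R] [Algebra ℤ_[p] R] [Module.Finite ℤ_[p] R]
    (I : Ideal R) (hI : I ≠ ⊥) (a : ℕ)
    (hpaI : algebraMap ℤ_[p] R ((p : ℤ_[p]) ^ a) ∈ I) :
    Finite (R ⧸ I) ∧
    ∃ ψ : (R ⧸ I) →+ ZMod (p ^ a),
      ∀ J : Ideal (R ⧸ I), (∀ x ∈ J, ψ x = 0) → J = ⊥ := by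
  classical
  haveI : NeZero (p ^ a) := ⟨pow_ne_zero a (Nat.Prime.ne_zero Fact.out)⟩
  -- p^a = 0 in the quotient
  have hp0 : ((p : R ⧸ I)) ^ a = 0 := by
    have h1 : (Ideal.Quotient.mk I) (algebraMap ℤ_[p] R ((p : ℤ_[p]) ^ a)) = 0 :=
      Ideal.Quotient.eq_zero_iff_mem.mpr hpaI
    rw [map_pow, map_natCast, map_pow, map_natCast] at h1
    exact h1
  -- finiteness
  haveI : Module.Finite ℤ_[p] (R ⧸ I) :=
    Module.Finite.of_surjective (Ideal.Quotient.mkₐ ℤ_[p] I).toLinearMap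
      (Ideal.Quotient.mkₐ_surjective ℤ_[p] I)
  have hpsmul : ∀ y : R ⧸ I, ((p : ℤ_[p]) ^ a) • y = 0 := by
    intro y
    rw [Algebra.smul_def, map_pow, map_natCast, hp0, zero_mul]
  have key : ∀ (r : ℤ_[p]) (y : R ⧸ I),
      (((PadicInt.toZModPow a r).val : ℤ_[p])) • y = r • y := by
    intro r y
    have hker : r - ((PadicInt.toZModPow a r).val : ℤ_[p]) ∈
        RingHom.ker (PadicInt.toZModPow (p := p) a) := by
      rw [RingHom.mem_ker, map_sub, map_natCast, ZMod.natCast_rightInverse, sub_self]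
    rw [PadicInt.ker_toZModPow] at hker
    obtain ⟨d, hd⟩ := Ideal.mem_span_singleton'.mp hker
    have h2 : r • y - (((PadicInt.toZModPow a r).val : ℤ_[p])) • y = 0 := by
      rw [← sub_smul, ← hd, mul_smul, hpsmul, smul_zero]
    have := sub_eq_zero.mp h2
    exact this.symm
  obtain ⟨s, hs⟩ := Module.Finite.fg_top (R := ℤ_[p]) (M := R ⧸ I)
  have hFin : Finite (R ⧸ I) := by
    set F : ((↑s : Set (R ⧸ I)) → ZMod (p ^ a)) → R ⧸ I :=
      fun c => ∑ i ∈ s.attach, ((c i).val : ℤ_[p]) • (i : R ⧸ I) with hF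
    have hsurj : Function.Surjective F := by
      intro x
      have hx : x ∈ Submodule.span ℤ_[p] (↑s : Set (R ⧸ I)) := by
        rw [hs]; trivial
      obtain ⟨f, -, hf⟩ := Submodule.mem_span_finset.mp hx
      refine ⟨fun i => PadicInt.toZModPow a (f i), ?_⟩
      rw [hF]
      simp only
      rw [Finset.sum_attach s (fun i => ((PadicInt.toZModPow a (f i)).val : ℤ_[p]) • i)]
      rw [← hf]
      exact Finset.sum_congr rfl fun i _ => key (f i) i
    exact Finite.of_surjective F hsurj
  refine ⟨hFin, ?_⟩
  haveI := hFin
  -- CRT decomposition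
  set ι := (UniqueFactorizationMonoid.factors I).toFinset with hι
  let E := IsDedekindDomain.quotientEquivPiFactors hI
  -- data for each prime factor
  have hforall : ∀ P : ι, ∃ (sP : R ⧸ (P : Ideal R) ^
        ((UniqueFactorizationMonoid.factors I).count (P : Ideal R)))
      (ψP : (R ⧸ (P : Ideal R) ^
        ((UniqueFactorizationMonoid.factors I).count (P : Ideal R))) →+ ZMod (p ^ a)),
      ψP sP ≠ 0 ∧ ∀ J : Ideal (R ⧸ (P : Ideal R) ^
        ((UniqueFactorizationMonoid.factors I).count (P : Ideal R))), J ≠ ⊥ → sP ∈ J := by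
    intro P
    have hPmem : (P : Ideal R) ∈ UniqueFactorizationMonoid.factors I :=
      Multiset.mem_toFinset.mp P.2
    have hPprime : Prime (P : Ideal R) := UniqueFactorizationMonoid.prime_of_factor _ hPmem
    have hcount : 0 < (UniqueFactorizationMonoid.factors I).count (P : Ideal R) :=
      Multiset.count_pos.mpr hPmem
    set e := (UniqueFactorizationMonoid.factors I).count (P : Ideal R) with he_def
    -- I ≤ P ^ e
    have hIle : I ≤ (P : Ideal R) ^ e := by
      rw [← Ideal.dvd_iff_le]
      have hrep : Multiset.replicate e (P : Ideal R) ≤ UniqueFactorizationMonoid.factors I :=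
        Multiset.le_count_iff_replicate_le.mp le_rfl
      have h1 : (P : Ideal R) ^ e ∣ (UniqueFactorizationMonoid.factors I).prod := by
        rw [← Multiset.prod_replicate]
        exact Multiset.prod_dvd_prod_of_le hrep
      rwa [associated_iff_eq.mp (UniqueFactorizationMonoid.factors_prod hI)] at h1
    -- the quotient is finite
    have hsurjP : Function.Surjective
        ((Pi.evalRingHom _ P).comp E.toRingHom) :=
      (Function.surjective_eval P).comp E.surjective
    haveI : Finite (R ⧸ (P : Ideal R) ^ e) := Finite.of_surjective _ hsurjP
    -- killed by p ^ a
    have hkill : ∀ x : R ⧸ (P : Ideal R) ^ e, (p ^ a) • x = 0 := by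
      intro x
      have h0 : ((p : R ⧸ (P : Ideal R) ^ e)) ^ a = 0 := by
        have h1 : (Ideal.Quotient.mk ((P : Ideal R) ^ e))
            (algebraMap ℤ_[p] R ((p : ℤ_[p]) ^ a)) = 0 :=
          Ideal.Quotient.eq_zero_iff_mem.mpr (hIle hpaI)
        rw [map_pow, map_natCast, map_pow, map_natCast] at h1
        exact h1
      rw [nsmul_eq_mul, Nat.cast_pow, h0, zero_mul]
    obtain ⟨sP, hsP0, hsPmem⟩ := exists_min_elt (P : Ideal R) hPprime hcount
    obtain ⟨ψP, hψP⟩ := exists_addChar_ne_zero (p ^ a) _ hkill hsP0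
    exact ⟨sP, ψP, hψP, hsPmem⟩
  choose sP ψP hψP hsPmem using hforall
  -- the functional
  set Ψ : (R ⧸ I) →+ ZMod (p ^ a) :=
    AddMonoidHom.mk' (fun x => ∑ P : ι, ψP P ((E x) P)) (by
      intro x y
      rw [map_add]
      simp only [Pi.add_apply, map_add]
      exact Finset.sum_add_distrib) with hΨ
  refine ⟨Ψ, ?_⟩
  intro J hJ
  by_contra hJne
  obtain ⟨y, hyJ, hy0⟩ := Submodule.exists_mem_ne_zero_of_ne_bot hJne
  have hz0 : E y ≠ 0 := by
    intro h
    exact hy0 (E.injective (by rw [h, map_zero]))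
  obtain ⟨P, hzP⟩ : ∃ P : ι, (E y) P ≠ 0 := by
    by_contra h
    push_neg at h
    exact hz0 (funext fun P => h P)
  -- sP P lies in the span of (E y) P
  have hspan : Ideal.span {(E y) P} ≠ ⊥ := by
    rw [Ne, Ideal.span_singleton_eq_bot]
    exact hzP
  obtain ⟨c, hc⟩ := Ideal.mem_span_singleton'.mp (hsPmem P _ hspan)
  -- build the element of J
  set u : ∀ Q : ι, R ⧸ (Q : Ideal R) ^
      ((UniqueFactorizationMonoid.factors I).count (Q : Ideal R)) :=
    Pi.single P c * E y with hu
  have hxJ : E.symm u ∈ J := by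
    have : E.symm u = E.symm (Pi.single P c) * y := by
      rw [hu, map_mul, RingEquiv.symm_apply_apply]
    rw [this]
    exact Ideal.mul_mem_left J _ hyJ
  have hval : Ψ (E.symm u) = ψP P (sP P) := by
    rw [hΨ]
    simp only [AddMonoidHom.mk'_apply, RingEquiv.apply_symm_apply]
    rw [Finset.sum_eq_single P]
    · rw [hu]
      simp only [Pi.mul_apply, Pi.single_eq_same, hc]
    · intro Q _ hQP
      rw [hu]
      simp only [Pi.mul_apply, Pi.single_eq_of_ne hQP, zero_mul, map_zero]
    · intro h
      exact absurd (Finset.mem_univ P) h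
  have := hJ _ hxJ
  rw [hval] at this
  exact hψP P this

/-- Let `K` be a finite extension of `ℚ_p` with ring of integers `𝒪_K` (the integral
closure of `ℤ_p` in `K`), and let `I ⊆ 𝒪_K` be a nonzero ideal with `I ∩ ℤ_p = p^a ℤ_p`.
Then `𝒪_K/I` is a finite symmetric `ZMod (p^a)`-algebra. -/
theorem padic_quotient_symmetric (p : ℕ) [Fact p.Prime] (K : Type*) [Field K]
    [Algebra ℚ_[p] K] [FiniteDimensional ℚ_[p] K]
    [Algebra ℤ_[p] K] [IsScalarTower ℤ_[p] ℚ_[p] K]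
    (I : Ideal (integralClosure ℤ_[p] K)) (hI : I ≠ ⊥) (a : ℕ)
    (ha : Ideal.comap (algebraMap ℤ_[p] (integralClosure ℤ_[p] K)) I
        = Ideal.span {(p : ℤ_[p]) ^ a}) :
    Finite ((integralClosure ℤ_[p] K) ⧸ I) ∧
    ∃ ψ : ((integralClosure ℤ_[p] K) ⧸ I) →+ ZMod (p ^ a),
      ∀ J : Ideal ((integralClosure ℤ_[p] K) ⧸ I), (∀ x ∈ J, ψ x = 0) → J = ⊥ := by
  haveI : IsDedekindDomain (integralClosure ℤ_[p] K) :=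
    integralClosure.isDedekindDomain ℤ_[p] ℚ_[p] K
  haveI : Module.Finite ℤ_[p] (integralClosure ℤ_[p] K) :=
    IsIntegralClosure.finite ℤ_[p] ℚ_[p] K (integralClosure ℤ_[p] K)
  have hpaI : algebraMap ℤ_[p] (integralClosure ℤ_[p] K) ((p : ℤ_[p]) ^ a) ∈ I := by
    rw [← Ideal.mem_comap, ha]
    exact Ideal.mem_span_singleton_self _
  exact main_aux p (integralClosure ℤ_[p] K) I hI a hpaI
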